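/- Let m ≥ 8 be an integer and let k be an integer with 0 ≤ k ≤ m² − 4. Then P_{R(m)}(k) + P_{R(m)}(k+2) + P_{R(m)}(k−2) > 0 (where the term P_{R(m)}(k−2) is taken to be 0 when k < 2) if and only if k ∉ {1, 4, 6, 8, m²−12, m²−10, m²−8, m²−5}. -/
import Mathlib


namespace SquareKronecker

/-- `R m`: the set `{5, 7, 9, …, 2m - 1}` of odd integers between `5` and `2m - 1`. -/
def R (m : ℕ) : Finset ℕ :=
  (Finset.range (2 * m)).filter (fun j => Odd j ∧ 5 ≤ j)

/-- `P m j`: the number of subsets of `R m` whose elements sum to `j`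
(so `P m 0 = 1`, counting the empty subset). -/
def P (m j : ℕ) : ℕ :=
  ((R m).powerset.filter (fun S => S.sum id = j)).card

/-- any finset of naturals with `c` elements has sum at least `0+1+...+(c-1)`. -/
lemma key (A : Finset ℕ) : A.card * A.card ≤ 2 * A.sum id + A.card := by
  induction A using Finset.strongInduction with
  | _ A ih =>
    rcases A.eq_empty_or_nonempty with rfl | hA
    · simp
    · set M := A.max' hA with hM
      have hMA : M ∈ A := A.max'_mem hA
      have h1 := ih _ (Finset.erase_ssubset hMA)
      have hcard : (A.erase M).card = A.card - 1 := Finset.card_erase_of_mem hMA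
      have hsum : A.sum id = M + (A.erase M).sum id := (Finset.add_sum_erase _ _ hMA).symm
      have hcle : A.card ≤ M + 1 := by
        have hs : A ⊆ Finset.range (M+1) := fun x hx =>
          Finset.mem_range.mpr (Nat.lt_succ_of_le (A.le_max' x hx))
        simpa using Finset.card_le_card hs
      have hpos : 0 < A.card := Finset.card_pos.mpr hA
      obtain ⟨c, hc⟩ : ∃ c, A.card = c + 1 := ⟨A.card - 1, by omega⟩
      rw [hc] at hcle ⊢
      rw [hcard, hc] at h1
      simp only [Nat.add_sub_cancel] at h1
      nlinarith [h1, hcle, hsum]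

lemma P_pos_iff (m j : ℕ) : 0 < P m j ↔ ∃ S ⊆ R m, S.sum id = j := by
  rw [P, Finset.card_pos, Finset.filter_nonempty_iff]
  constructor
  · rintro ⟨S, hS, h⟩; exact ⟨S, Finset.mem_powerset.mp hS, h⟩
  · rintro ⟨S, hS, h⟩; exact ⟨S, Finset.mem_powerset.mpr hS, h⟩

lemma mem_R (m x : ℕ) : x ∈ R m ↔ x < 2 * m ∧ x % 2 = 1 ∧ 5 ≤ x := by
  simp [R, Finset.mem_filter, Finset.mem_range, Nat.odd_iff, and_comm, and_assoc]

/-- the witness predicate -/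
def W (m j : ℕ) : Prop := ∃ t, j % 2 = t % 2 ∧ t * (t + 4) ≤ j ∧ j + t * t ≤ 2 * t * m

lemma W_of_rep (m j : ℕ) (h : ∃ S ⊆ R m, S.sum id = j) : W m j := by
  obtain ⟨S, hS, hsum⟩ := h
  set t := S.card with ht
  have hmem : ∀ x ∈ S, x % 2 = 1 ∧ 5 ≤ x ∧ x < 2 * m := by
    intro x hx
    have := (mem_R m x).mp (hS hx)
    tauto
  -- lower bound via h x = (x-5)/2
  have hinj : ∀ x ∈ S, ∀ y ∈ S, (x - 5)/2 = (y - 5)/2 → x = y := by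
    intro x hx y hy hxy
    have h1 := hmem x hx; have h2 := hmem y hy
    omega
  have hcard1 : (S.image (fun x => (x - 5)/2)).card = t := Finset.card_image_of_injOn hinj
  have hsum1 : (S.image (fun x => (x - 5)/2)).sum id = ∑ x ∈ S, (x - 5)/2 :=
    Finset.sum_image hinj
  have hk1 := key (S.image (fun x => (x - 5)/2))
  rw [hcard1, hsum1] at hk1
  have hid1 : S.sum id = 2 * (∑ x ∈ S, (x - 5)/2) + 5 * t := by
    have he : ∀ x ∈ S, id x = 2 * ((x - 5)/2) + 5 := by
      intro x hx; have := hmem x hx; simp only [id]; omega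
    calc S.sum id = ∑ x ∈ S, (2 * ((x - 5)/2) + 5) := Finset.sum_congr rfl he
    _ = 2 * (∑ x ∈ S, (x - 5)/2) + 5 * t := by
        rw [Finset.sum_add_distrib, Finset.sum_const, ← Finset.mul_sum, ht, smul_eq_mul]
        ring
  -- upper bound via g x = (2m-1-x)/2
  have hinj2 : ∀ x ∈ S, ∀ y ∈ S, (2*m - 1 - x)/2 = (2*m - 1 - y)/2 → x = y := by
    intro x hx y hy hxy
    have h1 := hmem x hx; have h2 := hmem y hy
    omega
  have hcard2 : (S.image (fun x => (2*m - 1 - x)/2)).card = t := Finset.card_image_of_injOn hinj2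
  have hsum2 : (S.image (fun x => (2*m - 1 - x)/2)).sum id = ∑ x ∈ S, (2*m - 1 - x)/2 :=
    Finset.sum_image hinj2
  have hk2 := key (S.image (fun x => (2*m - 1 - x)/2))
  rw [hcard2, hsum2] at hk2
  have hid2 : S.sum id + 2 * (∑ x ∈ S, (2*m - 1 - x)/2) = (2*m - 1) * t := by
    have he : ∀ x ∈ S, id x + 2 * ((2*m - 1 - x)/2) = 2*m - 1 := by
      intro x hx; have := hmem x hx; simp only [id]; omega
    calc S.sum id + 2 * (∑ x ∈ S, (2*m - 1 - x)/2)
        = ∑ x ∈ S, (id x + 2 * ((2*m - 1 - x)/2)) := by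
          rw [Finset.sum_add_distrib, Finset.mul_sum]
    _ = ∑ _x ∈ S, (2*m - 1) := Finset.sum_congr rfl he
    _ = (2*m - 1) * t := by rw [Finset.sum_const, ht, smul_eq_mul, mul_comm]
  refine ⟨t, ?_, ?_, ?_⟩
  · omega
  · nlinarith [hk1, hid1, hsum]
  · rcases Nat.eq_zero_or_pos t with h0 | hpos
    · have hS0 : S = ∅ := Finset.card_eq_zero.mp (by omega)
      subst hS0
      simp at hsum
      rw [h0, ← hsum]
      simp
    · obtain ⟨x, hx⟩ := Finset.card_pos.mp hpos
      have hxm := hmem x hx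
      obtain ⟨m', rfl⟩ : ∃ m', m = m' + 1 := ⟨m - 1, by omega⟩
      have hsub : 2*(m'+1) - 1 = 2*m'+1 := by omega
      rw [hsub] at hid2 hk2
      nlinarith [hk2, hid2, hsum]



def T (u : ℕ) : Finset ℕ := (Finset.range u).image (fun i => 2 * i + 5)

lemma T_mono {u : ℕ} : T u ⊆ T (u + 1) :=
  Finset.image_subset_image (Finset.range_subset_range.mpr (Nat.le_succ u))

lemma mem_T {u x : ℕ} : x ∈ T u ↔ ∃ i, i < u ∧ 2 * i + 5 = x := by
  simp [T, Finset.mem_image, Finset.mem_range]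

lemma constr : ∀ u t j, t ≤ u → t * (t + 4) ≤ j → j + t * t ≤ 2 * t * u + 4 * t →
    j % 2 = t % 2 → ∃ S ⊆ T u, S.sum id = j := by
  intro u
  induction u with
  | zero =>
    intro t j h1 h2 h3 h4
    interval_cases t
    refine ⟨∅, by simp, ?_⟩
    simp
    omega
  | succ u ih =>
    intro t j h1 h2 h3 h4
    rcases Nat.eq_zero_or_pos t with rfl | htpos
    · refine ⟨∅, by simp, ?_⟩
      simp
      omega
    obtain ⟨s, rfl⟩ : ∃ s, t = s + 1 := ⟨t - 1, by omega⟩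
    by_cases hbig : 2 * u + 5 + s * (s + 4) ≤ j
    · -- use the element 2u+5
      obtain ⟨j', rfl⟩ : ∃ j', j = j' + (2 * u + 5) := ⟨j - (2 * u + 5), by omega⟩
      have hj' : j' + (2 * u + 5) - (2 * u + 5) = j' := by omega
      obtain ⟨S', hS', hsum'⟩ := ih s j' (by omega) (by omega) (by nlinarith) (by omega)
      refine ⟨insert (2 * u + 5) S', ?_, ?_⟩
      · intro x hx
        rcases Finset.mem_insert.mp hx with rfl | hx'
        · exact mem_T.mpr ⟨u, by omega, rfl⟩
        · exact T_mono (hS' hx')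
      · have hnot : 2 * u + 5 ∉ S' := by
          intro hmem
          obtain ⟨i, hi, hieq⟩ := mem_T.mp (hS' hmem)
          omega
        rw [Finset.sum_insert hnot, hsum']
        simp only [id]
        omega
    · -- don't use it
      push_neg at hbig
      -- parity: j and 2u+5+s(s+4) have the same parity
      have hpar : (2 * u + 5 + s * (s + 4)) % 2 = j % 2 := by
        have : (s * (s + 4)) % 2 = s % 2 := by
          rcases Nat.even_or_odd s with ⟨a, rfl⟩ | ⟨a, rfl⟩ <;> [skip; skip] <;>
            · ring_nf
              omega
        omega
      have hle : j + 2 ≤ 2 * u + 5 + s * (s + 4) := by omega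
      have htu : s + 1 ≤ u := by
        by_contra hc
        have : s = u := by omega
        subst this
        nlinarith
      obtain ⟨S', hS', hsum'⟩ := ih (s + 1) j htu h2 (by nlinarith) h4
      exact ⟨S', fun x hx => T_mono (hS' hx), hsum'⟩




lemma notW_low (m j : ℕ) (hj : j ≤ 10) (h0 : j ≠ 0) (h59 : j % 2 = 0 ∨ j < 5) :
    ¬ W m j := by
  rintro ⟨t, hpar, hlb, hub⟩
  match t with
  | 0 => omega
  | 1 => omega
  | (t + 2) => nlinarith

lemma notW_topA (m j : ℕ) (hm : 8 ≤ m) (h1 : m ^ 2 ≤ j + 14) (h2 : j + 6 ≤ m ^ 2)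
    (hpar : j % 2 = m % 2) : ¬ W m j := by
  rintro ⟨t, hpar', hlb, hub⟩
  obtain ⟨a, rfl⟩ : ∃ a, m = a + 8 := ⟨m - 8, by omega⟩
  have hsq : (a + 8) ^ 2 = a * a + 16 * a + 64 := by ring
  rw [hsq] at h1 h2
  rcases Nat.lt_or_ge t (a + 5) with hc | hc
  · -- t ≤ m - 4
    obtain ⟨d, hd⟩ : ∃ d, a + 4 = t + d := ⟨a + 4 - t, by omega⟩
    nlinarith [hd, sq_nonneg d]
  rcases Nat.lt_or_ge t (a + 6) with hc2 | hc2
  · -- t = m - 3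
    have : t = a + 5 := by omega
    omega
  rcases Nat.lt_or_ge t (a + 7) with hc3 | hc3
  · -- t = m - 2
    have : t = a + 6 := by omega
    subst this
    nlinarith
  · -- t ≥ m - 1
    nlinarith

lemma notW_topB (m j : ℕ) (hm : 8 ≤ m) (h1 : m ^ 2 ≤ j + 7) (h2 : j ≤ m ^ 2)
    (hpar : j % 2 ≠ m % 2) : ¬ W m j := by
  rintro ⟨t, hpar', hlb, hub⟩
  obtain ⟨a, rfl⟩ : ∃ a, m = a + 8 := ⟨m - 8, by omega⟩
  have hsq : (a + 8) ^ 2 = a * a + 16 * a + 64 := by ring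
  rw [hsq] at h1 h2
  rcases Nat.lt_or_ge t (a + 6) with hc | hc
  · -- t ≤ m - 3 : upper bound at most m^2 - 9
    obtain ⟨d, hd⟩ : ∃ d, a + 5 = t + d := ⟨a + 5 - t, by omega⟩
    nlinarith [hd, sq_nonneg d]
  rcases Nat.lt_or_ge t (a + 7) with hc2 | hc2
  · -- t = m - 2 : parity clash
    have : t = a + 6 := by omega
    omega
  · -- t ≥ m - 1 : lower bound too big
    nlinarith




lemma sq_mod_two (t : ℕ) : (t * t) % 2 = t % 2 := by
  conv_lhs => rw [Nat.mul_mod]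
  have h : t % 2 = 0 ∨ t % 2 = 1 := by omega
  rcases h with h | h <;> rw [h]

lemma middle (m k : ℕ) (hm : 8 ≤ m) (h10 : 10 ≤ k) (hk : k + 16 ≤ m ^ 2) :
    W m (k - 2) ∨ W m k ∨ W m (k + 2) := by
  have hk' : k + 16 ≤ m * m := by rw [← pow_two]; exact hk
  obtain ⟨t0, hs1, hs2, ht04⟩ : ∃ t0, t0 * t0 ≤ k + 6 ∧ k + 6 < (t0 + 1) * (t0 + 1) ∧ 4 ≤ t0 :=
    ⟨Nat.sqrt (k + 6), Nat.sqrt_le _, Nat.lt_succ_sqrt _, Nat.le_sqrt.mpr (by omega)⟩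
  obtain ⟨t, htpar, ht1, ht2⟩ :
      ∃ t, t % 2 = k % 2 ∧ 1 ≤ t ∧ (t + 2 ≤ t0 ∧ t0 ≤ t + 3) := by
    by_cases hc : t0 % 2 = k % 2
    · exact ⟨t0 - 2, by omega, by omega, by omega, by omega⟩
    · exact ⟨t0 - 3, by omega, by omega, by omega, by omega⟩
  have hlb2 : (t + 2) * (t + 2) ≤ k + 6 :=
    le_trans (Nat.mul_le_mul ht2.1 ht2.1) hs1
  have hlb : t * (t + 4) + 4 ≤ k + 6 := by
    linarith [show (t + 2) * (t + 2) = t * (t + 4) + 4 from by ring, hlb2]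
  have hub0 : k + 6 < (t + 4) * (t + 4) :=
    lt_of_lt_of_le hs2 (Nat.mul_le_mul (by omega) (by omega))
  have hparsq : ((t + 4) * (t + 4)) % 2 = t % 2 := by
    have := sq_mod_two (t + 4); omega
  have hub : k + 8 ≤ (t + 4) * (t + 4) := by omega
  have ht3 : t + 3 ≤ m := by
    by_contra hc
    push_neg at hc
    have : m * m ≤ (t + 2) * (t + 2) := Nat.mul_le_mul (by omega) (by omega)
    omega
  by_cases hA : t * (t + 4) + 2 ≤ k
  · left
    obtain ⟨e, rfl⟩ : ∃ e, k = e + 2 := ⟨k - 2, by omega⟩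
    have he2 : e + 2 - 2 = e := by omega
    rw [he2]
    refine ⟨t, by omega, by omega, ?_⟩
    rcases Nat.lt_or_ge m (t + 5) with hB | hB
    · -- m ≤ t + 4, use e ≤ m^2 - 18
      obtain ⟨d, hd⟩ : ∃ d, m = t + d := ⟨m - t, by omega⟩
      have hd4 : 3 ≤ d ∧ d ≤ 4 := by omega
      subst hd
      have hexp : (t + d) * (t + d) = t * t + 2 * (t * d) + d * d := by ring
      have hdd : d * d ≤ 16 := by
        calc d * d ≤ 4 * 4 := Nat.mul_le_mul hd4.2 hd4.2
        _ = 16 := rfl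
      have hexp2 : 2 * t * (t + d) = 2 * (t * t) + 2 * (t * d) := by ring
      linarith [hk', hexp, hdd, hexp2]
    · -- t + 5 ≤ m
      rcases Nat.lt_or_ge t 3 with h3 | h3
      · have : t = 1 ∨ t = 2 := by omega
        rcases this with rfl | rfl <;> (norm_num at hub ⊢; omega)
      · have h1 : e + 2 + 8 ≤ t * t + 8 * t + 16 := by
          linarith [hub, show (t + 4) * (t + 4) = t * t + 8 * t + 16 from by ring]
        have ha : 2 * t * (t + 5) = 2 * (t * t) + 10 * t := by ring
        have hb : 2 * t * (t + 5) ≤ 2 * t * m := Nat.mul_le_mul_left _ hB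
        have h8 : 8 * t + 6 ≤ 10 * t := by omega
        linarith [h1, ha, hb, h8]
  · right
    have hpar2 : (t * (t + 4)) % 2 = t % 2 := by
      have := sq_mod_two t
      have hexp : t * (t + 4) = t * t + 4 * t := by ring
      omega
    have hcases : t * (t + 4) = k ∨ t * (t + 4) = k + 2 := by omega
    have hW : W m (t * (t + 4)) := by
      refine ⟨t, by omega, le_refl _, ?_⟩
      have hb : 2 * t * (t + 3) ≤ 2 * t * m := Nat.mul_le_mul_left _ (by omega)
      linarith [show 2 * t * (t + 3) = t * (t + 4) + t * t + 2 * t from by ring, hb]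
    rcases hcases with h | h
    · left; rwa [h] at hW
    · right; rwa [h] at hW




/-- witness near the top: `t = m - d` for `2 ≤ d ≤ 4`. -/
lemma W_near_top (m j d : ℕ) (hm : 8 ≤ m) (hd : 2 ≤ d) (hd4 : d ≤ 4)
    (hub : j + d * d ≤ m ^ 2) (hlb : m ^ 2 + d * d ≤ j + (2 * d - 4) * m + 4 * d)
    (hpar : (j + d * d) % 2 = m ^ 2 % 2) : W m j := by
  obtain ⟨a, rfl⟩ : ∃ a, m = a + 8 := ⟨m - 8, by omega⟩
  have hsq : (a + 8) ^ 2 = a * a + 16 * a + 64 := by ring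
  rw [hsq] at hub hlb hpar
  have hamod := Nat.mul_mod a a 2
  have ha2 : a % 2 = 0 ∨ a % 2 = 1 := by omega
  have hmod : (a * a) % 2 = a % 2 := by rcases ha2 with h | h <;> rw [hamod, h]
  interval_cases d
  · -- d = 2, t = a + 6
    refine ⟨a + 6, by omega, ?_, ?_⟩
    · have h1 : (a + 6) * (a + 6 + 4) = a * a + 16 * a + 60 := by ring
      omega
    · have h1 : (a + 6) * (a + 6) = a * a + 12 * a + 36 := by ring
      have h2 : 2 * (a + 6) * (a + 8) = 2 * (a * a) + 28 * a + 96 := by ring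
      have h3 : 2 * 2 - 4 = 0 := by omega
      rw [h3] at hlb
      omega
  · -- d = 3, t = a + 5
    refine ⟨a + 5, by omega, ?_, ?_⟩
    · have h1 : (a + 5) * (a + 5 + 4) = a * a + 14 * a + 45 := by ring
      have h3 : (2 * 3 - 4) * (a + 8) = 2 * a + 16 := by omega
      rw [h3] at hlb
      omega
    · have h1 : (a + 5) * (a + 5) = a * a + 10 * a + 25 := by ring
      have h2 : 2 * (a + 5) * (a + 8) = 2 * (a * a) + 26 * a + 80 := by ring
      omega
  · -- d = 4, t = a + 4
    refine ⟨a + 4, by omega, ?_, ?_⟩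
    · have h1 : (a + 4) * (a + 4 + 4) = a * a + 12 * a + 32 := by ring
      have h3 : (2 * 4 - 4) * (a + 8) = 4 * a + 32 := by omega
      rw [h3] at hlb
      omega
    · have h1 : (a + 4) * (a + 4) = a * a + 8 * a + 16 := by ring
      have h2 : 2 * (a + 4) * (a + 8) = 2 * (a * a) + 24 * a + 64 := by ring
      omega


lemma R_eq_T (m : ℕ) (hm : 2 ≤ m) : R m = T (m - 2) := by
  ext x
  rw [mem_R, mem_T]
  constructor
  · rintro ⟨h1, h2, h3⟩
    exact ⟨(x - 5) / 2, by omega, by omega⟩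
  · rintro ⟨i, hi, rfl⟩
    omega

lemma rep_of_W (m j : ℕ) (hm : 8 ≤ m) (h : W m j) : ∃ S ⊆ R m, S.sum id = j := by
  obtain ⟨t, hp, hlb, hub⟩ := h
  obtain ⟨a, rfl⟩ : ∃ a, m = a + 8 := ⟨m - 8, by omega⟩
  have ht : t ≤ a + 6 := by
    by_contra hc
    push_neg at hc
    have h1 : 2 * t * (a + 8) ≤ 2 * t * (t + 1) := Nat.mul_le_mul_left _ (by omega)
    have h2 : 2 * t * (t + 1) + 2 * t = t * t + t * (t + 4) := by ring
    omega
  have hRT : R (a + 8) = T (a + 6) := by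
    have h := R_eq_T (a + 8) (by omega)
    have h62 : a + 8 - 2 = a + 6 := by omega
    rwa [h62] at h
  rw [hRT]
  refine constr (a + 6) t j ht hlb ?_ hp
  have h3 : 2 * t * (a + 6) + 4 * t = 2 * t * (a + 8) := by ring
  omega

lemma rep_iff (m j : ℕ) (hm : 8 ≤ m) : 0 < P m j ↔ W m j :=
  ⟨fun h => W_of_rep m j ((P_pos_iff m j).mp h),
   fun h => (P_pos_iff m j).mpr (rep_of_W m j hm h)⟩

/-- Let `m ≥ 8` and `0 ≤ k ≤ m² - 4`. Then `P_{R(m)}(k) + P_{R(m)}(k+2) + P_{R(m)}(k-2) > 0`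
(where the term `P_{R(m)}(k-2)` is taken to be `0` when `k < 2`) if and only if
`k ∉ {1, 4, 6, 8, m² - 12, m² - 10, m² - 8, m² - 5}`. -/
theorem P_pos_iff_two (m k : ℕ) (hm : 8 ≤ m) (hk : k ≤ m ^ 2 - 4) :
    0 < P m k + P m (k + 2) + (if k < 2 then 0 else P m (k - 2)) ↔
      k ∉ ({1, 4, 6, 8, m ^ 2 - 12, m ^ 2 - 10, m ^ 2 - 8, m ^ 2 - 5} : Finset ℕ) := by
  have hm2 : m ^ 2 % 2 = m % 2 := by rw [pow_two]; exact sq_mod_two m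
  have hm64 : 64 ≤ m ^ 2 := by
    rw [pow_two]
    calc (64 : ℕ) = 8 * 8 := rfl
    _ ≤ m * m := Nat.mul_le_mul hm hm
  simp only [Finset.mem_insert, Finset.mem_singleton]
  constructor
  · -- forward: positive window → not exceptional
    intro hpos hkE
    have hW : W m k ∨ W m (k + 2) ∨ (2 ≤ k ∧ W m (k - 2)) := by
      split_ifs at hpos with hc
      · have h2 : 0 < P m k ∨ 0 < P m (k + 2) := by omega
        rcases h2 with h | h
        · exact Or.inl ((rep_iff m k hm).mp h)
        · exact Or.inr (Or.inl ((rep_iff m (k + 2) hm).mp h))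
      · have h2 : 0 < P m k ∨ 0 < P m (k + 2) ∨ 0 < P m (k - 2) := by omega
        rcases h2 with h | h | h
        · exact Or.inl ((rep_iff m k hm).mp h)
        · exact Or.inr (Or.inl ((rep_iff m (k + 2) hm).mp h))
        · exact Or.inr (Or.inr ⟨by omega, (rep_iff m (k - 2) hm).mp h⟩)
    rcases hkE with rfl | rfl | rfl | rfl | hk5 | hk5 | hk5 | hk5
    · rcases hW with hw | hw | ⟨h2, hw⟩
      · exact notW_low m 1 (by omega) (by omega) (by omega) hw
      · exact notW_low m 3 (by omega) (by omega) (by omega) hw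
      · omega
    · rcases hW with hw | hw | ⟨h2, hw⟩
      · exact notW_low m 4 (by omega) (by omega) (by omega) hw
      · exact notW_low m 6 (by omega) (by omega) (by omega) hw
      · exact notW_low m 2 (by omega) (by omega) (by omega) hw
    · rcases hW with hw | hw | ⟨h2, hw⟩
      · exact notW_low m 6 (by omega) (by omega) (by omega) hw
      · exact notW_low m 8 (by omega) (by omega) (by omega) hw
      · exact notW_low m 4 (by omega) (by omega) (by omega) hw
    · rcases hW with hw | hw | ⟨h2, hw⟩
      · exact notW_low m 8 (by omega) (by omega) (by omega) hw
      · exact notW_low m 10 (by omega) (by omega) (by omega) hw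
      · exact notW_low m 6 (by omega) (by omega) (by omega) hw
    · have hkk : k + 12 = m ^ 2 := by omega
      rcases hW with hw | hw | ⟨h2, hw⟩
      · exact notW_topA m k hm (by omega) (by omega) (by omega) hw
      · exact notW_topA m (k + 2) hm (by omega) (by omega) (by omega) hw
      · exact notW_topA m (k - 2) hm (by omega) (by omega) (by omega) hw
    · have hkk : k + 10 = m ^ 2 := by omega
      rcases hW with hw | hw | ⟨h2, hw⟩
      · exact notW_topA m k hm (by omega) (by omega) (by omega) hw
      · exact notW_topA m (k + 2) hm (by omega) (by omega) (by omega) hw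
      · exact notW_topA m (k - 2) hm (by omega) (by omega) (by omega) hw
    · have hkk : k + 8 = m ^ 2 := by omega
      rcases hW with hw | hw | ⟨h2, hw⟩
      · exact notW_topA m k hm (by omega) (by omega) (by omega) hw
      · exact notW_topA m (k + 2) hm (by omega) (by omega) (by omega) hw
      · exact notW_topA m (k - 2) hm (by omega) (by omega) (by omega) hw
    · have hkk : k + 5 = m ^ 2 := by omega
      rcases hW with hw | hw | ⟨h2, hw⟩
      · exact notW_topB m k hm (by omega) (by omega) (by omega) hw
      · exact notW_topB m (k + 2) hm (by omega) (by omega) (by omega) hw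
      · exact notW_topB m (k - 2) hm (by omega) (by omega) (by omega) hw
  · -- reverse: not exceptional → positive window
    intro hkE
    suffices hW : W m k ∨ W m (k + 2) ∨ (2 ≤ k ∧ W m (k - 2)) by
      rcases hW with hw | hw | ⟨h2, hw⟩
      · have := (rep_iff m k hm).mpr hw
        split_ifs <;> omega
      · have := (rep_iff m (k + 2) hm).mpr hw
        split_ifs <;> omega
      · have := (rep_iff m (k - 2) hm).mpr hw
        split_ifs <;> omega
    push_neg at hkE
    obtain ⟨hne1, hne4, hne6, hne8, hne12, hne10, hne8', hne5⟩ := hkE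
    rcases Nat.lt_or_ge k 10 with hsmall | hbig
    · -- small cases
      interval_cases k
      · exact Or.inl ⟨0, by norm_num⟩
      · omega
      · exact Or.inr (Or.inr ⟨by omega, ⟨0, by norm_num⟩⟩)
      · exact Or.inr (Or.inl ⟨1, by norm_num, by norm_num, by omega⟩)
      · omega
      · exact Or.inl ⟨1, by norm_num, by norm_num, by omega⟩
      · omega
      · exact Or.inl ⟨1, by norm_num, by norm_num, by omega⟩
      · omega
      · exact Or.inl ⟨1, by norm_num, by norm_num, by omega⟩
    rcases Nat.lt_or_ge (k + 16) (m ^ 2 + 1) with hmid | htop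
    · -- middle region
      rcases middle m k hm hbig (by omega) with hw | hw | hw
      · exact Or.inr (Or.inr ⟨by omega, hw⟩)
      · exact Or.inl hw
      · exact Or.inr (Or.inl hw)
    · -- top region
      have hcase : k + 4 = m ^ 2 ∨ k + 6 = m ^ 2 ∨ k + 7 = m ^ 2 ∨ k + 9 = m ^ 2 ∨
          k + 11 = m ^ 2 ∨ k + 13 = m ^ 2 ∨ k + 14 = m ^ 2 ∨ k + 15 = m ^ 2 := by omega
      rcases hcase with h | h | h | h | h | h | h | h
      · exact Or.inl (W_near_top m k 2 hm (by omega) (by omega) (by omega) (by omega) (by omega))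
      · exact Or.inr (Or.inl
          (W_near_top m (k + 2) 2 hm (by omega) (by omega) (by omega) (by omega) (by omega)))
      · exact Or.inr (Or.inr ⟨by omega,
          W_near_top m (k - 2) 3 hm (by omega) (by omega) (by omega) (by omega) (by omega)⟩)
      · exact Or.inl (W_near_top m k 3 hm (by omega) (by omega) (by omega) (by omega) (by omega))
      · exact Or.inr (Or.inl
          (W_near_top m (k + 2) 3 hm (by omega) (by omega) (by omega) (by omega) (by omega)))
      · exact Or.inr (Or.inr ⟨by omega,
          W_near_top m (k - 2) 3 hm (by omega) (by omega) (by omega) (by omega) (by omega)⟩)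
      · exact Or.inr (Or.inr ⟨by omega,
          W_near_top m (k - 2) 4 hm (by omega) (by omega) (by omega) (by omega) (by omega)⟩)
      · exact Or.inr (Or.inr ⟨by omega,
          W_near_top m (k - 2) 3 hm (by omega) (by omega) (by omega) (by omega) (by omega)⟩)


end SquareKronecker
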